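/- There exists a numbering with the Kolmogorov property that is not acceptable; that is, there is a numbering φ such that for every numbering ψ there is a constant c with: for every e there exists j ≤ c·e + c with φ_j = ψ_e, yet there is some numbering ψ for which no computable function f satisfies φ_{f(e)} = ψ_e for all e. -/

import Mathlib

/-- A numbering: a family of partial functions `φ_e : ℕ →. ℕ` such that the
two-variable map `(e, x) ↦ φ_e x` is partial recursive. -/
def IsNumbering (φ : ℕ → ℕ →. ℕ) : Prop := Partrec₂ φ

/-- `φ` is acceptable: every numbering translates into it via a computable function. -/
def Acceptable (φ : ℕ → ℕ →. ℕ) : Prop :=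
  ∀ ψ : ℕ → ℕ →. ℕ, IsNumbering ψ → ∃ f : ℕ → ℕ, Computable f ∧ ∀ e, φ (f e) = ψ e

/-- `φ` has the Kolmogorov property: every numbering translates into it with
linearly bounded (not necessarily computable) translation. -/
def KolmogorovProperty (φ : ℕ → ℕ →. ℕ) : Prop :=
  ∀ ψ : ℕ → ℕ →. ℕ, IsNumbering ψ → ∃ c : ℕ, ∀ e, ∃ j, j ≤ c * e + c ∧ φ j = ψ e

/-- `φ` is computably bounded: every numbering translates into it with a
computable bound on the translated index. -/
def ComputablyBounded (φ : ℕ → ℕ →. ℕ) : Prop :=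
  ∀ ψ : ℕ → ℕ →. ℕ, IsNumbering ψ → ∃ f : ℕ → ℕ, Computable f ∧ ∀ e, ∃ j, j ≤ f e ∧ φ j = ψ e

/-- `φ` is polynomially bounded with degree `p`. -/
def PolyBounded (φ : ℕ → ℕ →. ℕ) (p : ℕ) : Prop :=
  ∀ ψ : ℕ → ℕ →. ℕ, IsNumbering ψ → ∃ c : ℕ, ∀ e, ∃ j, j ≤ c * e ^ p + c ∧ φ j = ψ e

/-- The set of `φ`-minimal indices. -/
def MINset (φ : ℕ → ℕ →. ℕ) : Set ℕ := {e | ∀ j < e, φ j ≠ φ e}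

/-- Minimal indices of functions converging exactly on input 0. -/
def Mset (φ : ℕ → ℕ →. ℕ) : Set ℕ :=
  {e | e ∈ MINset φ ∧ (φ e 0).Dom ∧ ∀ x ≥ 1, ¬ (φ e x).Dom}

/-- `minIndex φ e` is the minimal index computing the same function as `e`. -/
noncomputable def minIndex (φ : ℕ → ℕ →. ℕ) (e : ℕ) : ℕ := sInf {j | φ j = φ e}

/-- A partial recursive `U` is optimal: every partial recursive `V` is simulated
with only linear increase of programs. -/
def OptimalMachine (U : ℕ →. ℕ) : Prop :=
  Nat.Partrec U ∧ ∀ V : ℕ →. ℕ, Nat.Partrec V →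
    ∃ c : ℕ, ∀ p, (V p).Dom → ∃ q, q ≤ c * p + c ∧ U q = V p

/-- Kolmogorov complexity of `x` with respect to `U`: the least binary length of
a `U`-program for `x`. (`Nat.size q` is the binary length of `q`.) -/
noncomputable def Cpx (U : ℕ →. ℕ) (x : ℕ) : ℕ :=
  sInf {n | ∃ q, U q = Part.some x ∧ Nat.size q = n}

/-- Kolmogorov complexity of (the canonical code of) a finite set. -/
noncomputable def CpxFinset (U : ℕ →. ℕ) (A : Finset ℕ) : ℕ :=
  Cpx U (Encodable.encode A)

/-- `A` is `(m,k)`-recursive: a computable labelling of `k`-tuples that is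
correct in at least `m` coordinates on every tuple. -/
def MKRecursive (m k : ℕ) (A : Set ℕ) : Prop :=
  ∃ f : (Fin k → ℕ) → Fin k → Bool, Computable f ∧
    ∀ x : Fin k → ℕ, m ≤ {i : Fin k | (f x i = true ↔ x i ∈ A)}.ncard


namespace KNA

open Nat.Partrec (Code)
open Nat.Partrec.Code
open Encodable Denumerable

/-- 2-adic valuation (number of trailing zero bits), with `ord2 0 = 0`. -/
def ord2 : ℕ → ℕ
  | 0 => 0
  | (n+1) => if (n+1) % 2 = 1 then 0 else ord2 ((n+1)/2) + 1
decreasing_by exact Nat.div_lt_self (Nat.succ_pos n) one_lt_two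

lemma ord2_of_odd {m : ℕ} (h : m % 2 = 1) : ord2 m = 0 := by
  match m, h with
  | (n+1), h => rw [ord2, if_pos h]

lemma ord2_of_even {m : ℕ} (h : m % 2 = 0) (h0 : m ≠ 0) : ord2 m = ord2 (m / 2) + 1 := by
  match m, h0 with
  | (n+1), _ => rw [ord2, if_neg (by omega)]

lemma ord2_mul_pow (i : ℕ) {m : ℕ} (hm : m % 2 = 1) : ord2 (2 ^ i * m) = i := by
  induction i with
  | zero => simpa using ord2_of_odd hm
  | succ i ih =>
    have h0 : 2 ^ (i+1) * m ≠ 0 := Nat.mul_ne_zero (pow_ne_zero _ two_ne_zero) (by omega)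
    have he : (2 ^ (i+1) * m) % 2 = 0 := by
      have : 2 ∣ 2 ^ (i+1) * m := Dvd.dvd.mul_right (dvd_pow_self 2 (Nat.succ_ne_zero i)) m
      omega
    rw [ord2_of_even he h0]
    have : 2 ^ (i+1) * m / 2 = 2 ^ i * m := by
      rw [pow_succ, mul_comm (2^i) 2, mul_assoc, Nat.mul_div_cancel_left _ (by norm_num)]
    rw [this, ih]

lemma ord2_spec : ∀ n : ℕ, n ≠ 0 →
    2 ^ ord2 n * (n / 2 ^ ord2 n) = n ∧ (n / 2 ^ ord2 n) % 2 = 1 := by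
  intro n
  induction n using Nat.strong_induction_on with
  | _ n ih =>
    intro hn
    rcases Nat.even_or_odd n with he | ho
    · have he' : n % 2 = 0 := Nat.even_iff.mp he
      have h2 : n / 2 ≠ 0 := by omega
      have hlt : n / 2 < n := Nat.div_lt_self (by omega) one_lt_two
      obtain ⟨h1, h2'⟩ := ih (n / 2) hlt h2
      rw [ord2_of_even he' hn]
      have hdiv : n / 2 ^ (ord2 (n/2) + 1) = n / 2 / 2 ^ (ord2 (n/2)) := by
        rw [Nat.div_div_eq_div_mul, pow_succ, mul_comm (2 ^ ord2 (n/2)) 2,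
          mul_comm 2 (2 ^ ord2 (n/2))]
      constructor
      · rw [hdiv, pow_succ, mul_comm (2 ^ ord2 (n/2)) 2, mul_assoc, h1]
        omega
      · rw [hdiv]; exact h2'
    · have ho' : n % 2 = 1 := Nat.odd_iff.mp ho
      rw [ord2_of_odd ho']
      simpa using ho'

lemma primrec_ord2 : Primrec ord2 := by
  have hg : Primrec₂ (fun (_ : ℕ) (l : List ℕ) =>
      if l.length % 2 = 1 then some 0
      else if l.length = 0 then some 0
      else (l[l.length / 2]?).map (· + 1) : ℕ → List ℕ → Option ℕ) := by
    have hlen : Primrec (fun p : ℕ × List ℕ => p.2.length) :=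
      Primrec.list_length.comp Primrec.snd
    exact Primrec.to₂ <| Primrec.ite
      (Primrec.eq.comp (Primrec.nat_mod.comp hlen (Primrec.const 2)) (Primrec.const 1))
      (Primrec.const (some 0))
      (Primrec.ite (Primrec.eq.comp hlen (Primrec.const 0)) (Primrec.const (some 0))
        (Primrec.option_map
          (Primrec.list_getElem?.comp Primrec.snd
            (Primrec.nat_div.comp hlen (Primrec.const 2)))
          (Primrec.succ.comp Primrec.snd).to₂))
  have H := Primrec.nat_strong_rec (fun (_ : ℕ) (n : ℕ) => ord2 n) hg ?_
  · exact H.comp (Primrec.const 0) Primrec.id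
  · intro a n
    simp only [List.length_map, List.length_range]
    rcases Nat.eq_zero_or_pos n with rfl | hn
    · simp [ord2]
    by_cases h : n % 2 = 1
    · rw [if_pos h, ord2_of_odd h]
    · rw [if_neg h, if_neg (by omega)]
      have hlt : n / 2 < n := Nat.div_lt_self hn one_lt_two
      rw [List.getElem?_map, List.getElem?_range hlt, ord2_of_even (by omega) (by omega)]
      rfl

/-- Decoders of an index `j`: write `j+1 = 2^(dI j) * dM j` with `dM j` odd,
and split `dM j = 8 * dE j + dK j`. -/
def dI (j : ℕ) : ℕ := ord2 (j + 1)
def dM (j : ℕ) : ℕ := (j + 1) / 2 ^ dI j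
def dE (j : ℕ) : ℕ := dM j / 8
def dK (j : ℕ) : ℕ := dM j % 8

lemma primrec_pow2 : Primrec (fun n : ℕ => 2 ^ n) :=
  (Primrec₂.unpaired'.1 Nat.Primrec.pow).comp (Primrec.const 2) Primrec.id

lemma primrec_dI : Primrec dI := primrec_ord2.comp Primrec.succ
lemma primrec_dM : Primrec dM :=
  Primrec.nat_div.comp Primrec.succ (primrec_pow2.comp primrec_dI)
lemma primrec_dE : Primrec dE := Primrec.nat_div.comp primrec_dM (Primrec.const 8)
lemma primrec_dK : Primrec dK := Primrec.nat_mod.comp primrec_dM (Primrec.const 8)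

/-- A code for the everywhere-diverging function. -/
noncomputable def cNone : Code := (exists_code.1 Nat.Partrec.none).choose

lemma eval_cNone (n : ℕ) : eval cNone n = Part.none :=
  congrFun (exists_code.1 Nat.Partrec.none).choose_spec n

/-- First-stage code/input. -/
noncomputable def C1 (p : ℕ × ℕ) : Code :=
  if dK p.1 = 3 ∨ dK p.1 = 5 then ofNat Code (dI p.1) else Code.const 0
def N1 (p : ℕ × ℕ) : ℕ := Nat.pair (dE p.1) 0

/-- Second-stage code/input. -/
noncomputable def C2 (q : (ℕ × ℕ) × ℕ) : Code :=
  if dK q.1.1 = 3 ∨ dK q.1.1 = 5 then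
    if q.1.2 = 0 then Code.const q.2
    else if evaln q.1.2 (ofNat Code q.2) q.2 = some (if dK q.1.1 = 3 then 0 else 1) then cNone
    else ofNat Code (dI q.1.1)
  else if q.1.2 = 0 then cNone else ofNat Code (dI q.1.1)
def N2 (q : (ℕ × ℕ) × ℕ) : ℕ := Nat.pair (dE q.1.1) q.1.2

/-- The numbering. -/
noncomputable def theta : ℕ → ℕ →. ℕ := fun j x =>
  (eval (C1 (j, x)) (N1 (j, x))).bind fun v => eval (C2 ((j, x), v)) (N2 ((j, x), v))

lemma computable_C1 : Computable C1 := by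
  have h35 : PrimrecPred (fun p : ℕ × ℕ => dK p.1 = 3 ∨ dK p.1 = 5) := by
    have h3 : PrimrecPred (fun p : ℕ × ℕ => dK p.1 = 3) :=
      Primrec.eq.comp (primrec_dK.comp Primrec.fst) (Primrec.const 3)
    have h5 : PrimrecPred (fun p : ℕ × ℕ => dK p.1 = 5) :=
      Primrec.eq.comp (primrec_dK.comp Primrec.fst) (Primrec.const 5)
    exact h3.or h5
  exact (Primrec.ite h35 ((Primrec.ofNat Code).comp (primrec_dI.comp Primrec.fst))
    (Primrec.const (Code.const 0))).to_comp

lemma computable_N1 : Computable N1 :=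
  (Primrec₂.natPair.comp (primrec_dE.comp Primrec.fst) (Primrec.const 0)).to_comp

lemma computable_C2 : Computable C2 := by
  have hdk : Primrec (fun q : (ℕ × ℕ) × ℕ => dK q.1.1) :=
    primrec_dK.comp (Primrec.fst.comp Primrec.fst)
  have h35 : PrimrecPred (fun q : (ℕ × ℕ) × ℕ => dK q.1.1 = 3 ∨ dK q.1.1 = 5) :=
    (Primrec.eq.comp hdk (Primrec.const 3)).or (Primrec.eq.comp hdk (Primrec.const 5))
  have hx0 : PrimrecPred (fun q : (ℕ × ℕ) × ℕ => q.1.2 = 0) :=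
    Primrec.eq.comp (Primrec.snd.comp Primrec.fst) (Primrec.const 0)
  have hofNatI : Primrec (fun q : (ℕ × ℕ) × ℕ => ofNat Code (dI q.1.1)) :=
    (Primrec.ofNat Code).comp (primrec_dI.comp (Primrec.fst.comp Primrec.fst))
  have hevaln : Primrec (fun q : (ℕ × ℕ) × ℕ => evaln q.1.2 (ofNat Code q.2) q.2) := by
    have := primrec_evaln
    exact this.comp <|
      ((Primrec.snd.comp Primrec.fst).pair ((Primrec.ofNat Code).comp Primrec.snd)).pair
        Primrec.snd
  have htarget : Primrec (fun q : (ℕ × ℕ) × ℕ => (some (if dK q.1.1 = 3 then 0 else 1) : Option ℕ)) :=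
    Primrec.option_some.comp
      (Primrec.ite (Primrec.eq.comp hdk (Primrec.const 3)) (Primrec.const 0) (Primrec.const 1))
  have hcond : PrimrecPred (fun q : (ℕ × ℕ) × ℕ =>
      evaln q.1.2 (ofNat Code q.2) q.2 = some (if dK q.1.1 = 3 then 0 else 1)) :=
    Primrec.eq.comp hevaln htarget
  exact (Primrec.ite h35
    (Primrec.ite hx0 (primrec_const.comp Primrec.snd)
      (Primrec.ite hcond (Primrec.const cNone) hofNatI))
    (Primrec.ite hx0 (Primrec.const cNone) hofNatI)).to_comp

lemma computable_N2 : Computable N2 :=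
  (Primrec₂.natPair.comp (primrec_dE.comp (Primrec.fst.comp Primrec.fst))
    (Primrec.snd.comp Primrec.fst)).to_comp

theorem numbering_theta : Partrec₂ theta := by
  have h1 : Partrec (fun p : ℕ × ℕ => eval (C1 p) (N1 p)) :=
    eval_part.comp computable_C1 computable_N1
  have h2 : Partrec (fun q : (ℕ × ℕ) × ℕ => eval (C2 q) (N2 q)) :=
    eval_part.comp computable_C2 computable_N2
  have h2' : Partrec₂ (fun (a : ℕ × ℕ) (v : ℕ) => eval (C2 (a, v)) (N2 (a, v))) :=
    h2.comp (Computable.fst.pair Computable.snd)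
  exact (h1.bind h2').of_eq fun p => rfl

/-- The index encoding: track `i`, argument `e`, mode `k`. -/
def enc (i e k : ℕ) : ℕ := 2 ^ i * (8 * e + k) - 1

lemma enc_succ (i e k : ℕ) (hk : k ≠ 0) : enc i e k + 1 = 2 ^ i * (8 * e + k) := by
  have h1 : 1 ≤ 2 ^ i * (8 * e + k) :=
    Nat.one_le_iff_ne_zero.2 (Nat.mul_ne_zero (pow_ne_zero _ two_ne_zero) (by omega))
  simp only [enc]; omega

lemma dI_enc {i e k : ℕ} (hk : k % 2 = 1) : dI (enc i e k) = i := by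
  rw [dI, enc_succ i e k (by omega), ord2_mul_pow i (by omega)]

lemma dM_enc {i e k : ℕ} (hk : k % 2 = 1) : dM (enc i e k) = 8 * e + k := by
  rw [dM, dI_enc hk, enc_succ i e k (by omega),
    Nat.mul_div_cancel_left _ (pow_pos two_pos i)]

lemma dE_enc {i e k : ℕ} (hk : k % 2 = 1) (hk8 : k < 8) : dE (enc i e k) = e := by
  rw [dE, dM_enc hk]; omega

lemma dK_enc {i e k : ℕ} (hk : k % 2 = 1) (hk8 : k < 8) : dK (enc i e k) = k := by
  rw [dK, dM_enc hk]; omega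

lemma enc_le (i e k : ℕ) (hk : k ≤ 8) : enc i e k ≤ 2 ^ (i + 3) * e + 2 ^ (i + 3) := by
  have h : (2:ℕ) ^ (i + 3) = 2 ^ i * 8 := by rw [pow_add]; norm_num
  calc enc i e k ≤ 2 ^ i * (8 * e + k) := Nat.sub_le _ _
    _ ≤ 2 ^ i * (8 * e + 8) := by
        exact Nat.mul_le_mul_left _ (by omega)
    _ = 2 ^ (i + 3) * e + 2 ^ (i + 3) := by rw [h]; ring

/-- Evaluation of `theta` on a non-gated index (mode `k ∉ {3,5}`). -/
lemma theta_enc_pure {i e k : ℕ} (hk : k % 2 = 1) (hk8 : k < 8)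
    (hk35 : ¬(k = 3 ∨ k = 5)) (x : ℕ) :
    theta (enc i e k) x =
      if x = 0 then Part.none else eval (ofNat Code i) (Nat.pair e x) := by
  have hK := dK_enc (i := i) (e := e) hk hk8
  have hI := dI_enc (i := i) (e := e) hk
  have hE := dE_enc (i := i) (e := e) hk hk8
  simp only [theta, C1, C2, N1, N2, hK, hI, hE, if_neg hk35, eval_const,
    Part.bind_some]
  by_cases hx : x = 0
  · simp [hx, eval_cNone]
  · simp [hx]

/-- Evaluation of `theta` on a gated index (mode `k ∈ {3,5}`). -/
lemma theta_enc_gate {i e k : ℕ} (hk35 : k = 3 ∨ k = 5) (x : ℕ) :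
    theta (enc i e k) x =
      (eval (ofNat Code i) (Nat.pair e 0)).bind fun v =>
        if x = 0 then Part.some v
        else if evaln x (ofNat Code v) v = some (if k = 3 then 0 else 1) then Part.none
        else eval (ofNat Code i) (Nat.pair e x) := by
  have hk : k % 2 = 1 := by rcases hk35 with rfl | rfl <;> norm_num
  have hk8 : k < 8 := by rcases hk35 with rfl | rfl <;> norm_num
  have hK := dK_enc (i := i) (e := e) hk hk8
  have hI := dI_enc (i := i) (e := e) hk
  have hE := dE_enc (i := i) (e := e) hk hk8
  simp only [theta, C1, C2, N1, N2, hK, hI, hE, if_pos hk35]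
  congr 1
  funext v
  by_cases hx : x = 0
  · simp [hx, eval_const]
  · by_cases hw : evaln x (ofNat Code v) v = some (if k = 3 then 0 else 1)
    · simp [hx, hw, eval_cNone]
    · simp [hx, hw]

/-- Every index is an encoded index. -/
lemma eq_enc (j : ℕ) : j = enc (dI j) (dE j) (dK j) ∧ dK j % 2 = 1 ∧ dK j < 8 := by
  obtain ⟨h1, h2⟩ := ord2_spec (j + 1) (Nat.succ_ne_zero j)
  have hM : 2 ^ dI j * dM j = j + 1 := h1
  have hModd : dM j % 2 = 1 := h2
  have hsplit : dM j = 8 * dE j + dK j := (Nat.div_add_mod (dM j) 8).symm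
  refine ⟨?_, by omega, Nat.mod_lt _ (by norm_num)⟩
  have : enc (dI j) (dE j) (dK j) + 1 = j + 1 := by
    rw [enc_succ _ _ _ (by omega), ← hsplit, hM]
  omega

/-- The two computably inseparable sets. -/
def Aset (v : ℕ) : Prop := eval (ofNat Code v) v = Part.some 0
def Bset (v : ℕ) : Prop := eval (ofNat Code v) v = Part.some 1

theorem kol_theta :
    ∀ ψ : ℕ → ℕ →. ℕ, Partrec₂ ψ → ∃ c : ℕ, ∀ e, ∃ j, j ≤ c * e + c ∧ theta j = ψ e := by
  intro ψ hψ
  have hψ' : Partrec fun p : ℕ × ℕ => ψ p.1 p.2 := hψ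
  have hp : Partrec fun n : ℕ => ψ n.unpair.1 n.unpair.2 := hψ'.comp Computable.unpair
  obtain ⟨c, hc⟩ := exists_code.1 (Partrec.nat_iff.1 hp)
  have hcev : ∀ e x, eval c (Nat.pair e x) = ψ e x := fun e x => by rw [hc]; simp
  have hON : ofNat Code (encode c) = c := ofNat_encode c
  set i := encode c with hi
  refine ⟨2 ^ (i + 3), fun e => ?_⟩
  by_cases h : (ψ e 0).Dom
  · obtain ⟨v, hv⟩ := Part.dom_iff_mem.1 h
    have hv' : ψ e 0 = Part.some v := Part.eq_some_iff.2 hv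
    by_cases hA : Aset v
    · have hB : ¬ Bset v := by
        intro hB; rw [Aset] at hA; rw [Bset, hA] at hB
        exact absurd (Part.mem_some_iff.1 (hB ▸ Part.mem_some 0)) (by norm_num)
      refine ⟨enc i e 5, enc_le i e 5 (by norm_num), ?_⟩
      funext x
      rw [theta_enc_gate (Or.inr rfl) x, hON, hcev e 0, hv', Part.bind_some]
      by_cases hx : x = 0
      · rw [if_pos hx, hx, hv']
      · rw [if_neg hx]
        have hw : ¬ (evaln x (ofNat Code v) v = some (if (5:ℕ) = 3 then 0 else 1)) := by
          rw [if_neg (by norm_num : ¬ (5:ℕ) = 3)]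
          intro hw
          exact hB (Part.eq_some_iff.2 (evaln_sound (Option.mem_def.2 hw)))
        rw [if_neg hw, hcev]
    · refine ⟨enc i e 3, enc_le i e 3 (by norm_num), ?_⟩
      funext x
      rw [theta_enc_gate (Or.inl rfl) x, hON, hcev e 0, hv', Part.bind_some]
      by_cases hx : x = 0
      · rw [if_pos hx, hx, hv']
      · rw [if_neg hx]
        have hw : ¬ (evaln x (ofNat Code v) v = some (if (3:ℕ) = 3 then 0 else 1)) := by
          rw [if_pos rfl]
          intro hw
          exact hA (Part.eq_some_iff.2 (evaln_sound (Option.mem_def.2 hw)))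
        rw [if_neg hw, hcev]
  · refine ⟨enc i e 1, enc_le i e 1 (by norm_num), ?_⟩
    funext x
    rw [theta_enc_pure (by norm_num) (by norm_num) (by norm_num) x]
    by_cases hx : x = 0
    · rw [if_pos hx, hx]
      exact (Part.eq_none_iff'.2 h).symm
    · rw [if_neg hx, hON, hcev]

/-- The constant numbering `ψ_e = const e`. -/
def psiConst : ℕ → ℕ →. ℕ := fun e _ => Part.some e

theorem numbering_psiConst : Partrec₂ psiConst := Computable.fst

theorem not_trans : ¬ ∃ f : ℕ → ℕ, Computable f ∧ ∀ e, theta (f e) = psiConst e := by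
  rintro ⟨f, hf, hfe⟩
  have hθ : ∀ e x, theta (f e) x = Part.some e := fun e x => by rw [hfe e]; rfl
  have key : ∀ e, (dK (f e) = 3 ∧ ¬ Aset e) ∨ (dK (f e) = 5 ∧ ¬ Bset e) := by
    intro e
    obtain ⟨hj, hkodd, hk8⟩ := eq_enc (f e)
    have hθ' : ∀ x, theta (enc (dI (f e)) (dE (f e)) (dK (f e))) x = Part.some e :=
      fun x => by rw [← hj]; exact hθ e x
    by_cases hk35 : dK (f e) = 3 ∨ dK (f e) = 5
    · have h0 := hθ' 0
      rw [theta_enc_gate hk35 0] at h0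
      have hP : eval (ofNat Code (dI (f e))) (Nat.pair (dE (f e)) 0) = Part.some e := by
        have hmem := Part.eq_some_iff.1 h0
        rw [Part.mem_bind_iff] at hmem
        obtain ⟨a, ha, hae⟩ := hmem
        rw [if_pos rfl] at hae
        exact Part.eq_some_iff.2 ((Part.mem_some_iff.1 hae) ▸ ha)
      have gen : ∀ t : ℕ, evaln t (ofNat Code e) e = some (if dK (f e) = 3 then 0 else 1)
          → False := by
        intro t hw
        have hx := hθ' t
        rw [theta_enc_gate hk35 t, hP, Part.bind_some] at hx
        have ht0 : t ≠ 0 := by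
          intro h; rw [h] at hw; simp [evaln] at hw
        rw [if_neg ht0, if_pos hw] at hx
        exact Part.notMem_none e (hx.symm ▸ Part.mem_some e)
      rcases hk35 with h3 | h5
      · left
        refine ⟨h3, fun hA => ?_⟩
        obtain ⟨s, hs⟩ := evaln_complete.1 (Part.eq_some_iff.1 hA)
        refine gen (s + 1) ?_
        rw [h3, if_pos rfl]
        exact Option.mem_def.1 (evaln_mono (Nat.le_succ s) hs)
      · right
        have h3' : ¬ dK (f e) = 3 := by omega
        refine ⟨h5, fun hB => ?_⟩
        obtain ⟨s, hs⟩ := evaln_complete.1 (Part.eq_some_iff.1 hB)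
        refine gen (s + 1) ?_
        rw [if_neg h3']
        exact Option.mem_def.1 (evaln_mono (Nat.le_succ s) hs)
    · exfalso
      have h0 := hθ' 0
      rw [theta_enc_pure hkodd hk8 hk35 0, if_pos rfl] at h0
      exact Part.notMem_none e (h0.symm ▸ Part.mem_some e)
  classical
  set χ : ℕ → ℕ := fun e => if dK (f e) = 5 then 1 else 0 with hχdef
  have hχ : Computable χ := by
    have h1 : Primrec (fun n : ℕ => if n = 5 then 1 else 0) :=
      Primrec.ite (Primrec.eq.comp Primrec.id (Primrec.const 5))
        (Primrec.const 1) (Primrec.const 0)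
    exact h1.to_comp.comp (primrec_dK.to_comp.comp hf)
  obtain ⟨c, hc⟩ := exists_code.1 (Partrec.nat_iff.1 hχ)
  have hv : eval (ofNat Code (encode c)) (encode c) = Part.some (χ (encode c)) := by
    rw [ofNat_encode, hc]; rfl
  by_cases h5 : dK (f (encode c)) = 5
  · have h1 : χ (encode c) = 1 := if_pos h5
    have hB : Bset (encode c) := by rw [Bset, hv, h1]
    rcases key (encode c) with ⟨h3, _⟩ | ⟨_, hnB⟩
    · omega
    · exact hnB hB
  · have h0 : χ (encode c) = 0 := if_neg h5
    have hA : Aset (encode c) := by rw [Aset, hv, h0]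
    rcases key (encode c) with ⟨_, hnA⟩ | ⟨h5', _⟩
    · exact hnA hA
    · exact h5 h5'

end KNA

/-- There exists a numbering with the Kolmogorov property that is not
acceptable: some numbering `ψ` admits no computable translation into `φ`. -/
theorem kolmogorov_not_acceptable :
    ∃ φ : ℕ → ℕ →. ℕ, IsNumbering φ ∧ KolmogorovProperty φ ∧
      ∃ ψ : ℕ → ℕ →. ℕ, IsNumbering ψ ∧
        ¬ ∃ f : ℕ → ℕ, Computable f ∧ ∀ e, φ (f e) = ψ e :=
  ⟨KNA.theta, KNA.numbering_theta, KNA.kol_theta, KNA.psiConst, KNA.numbering_psiConst,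
    KNA.not_trans⟩
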